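/- arXiv:1809.01637 — 2 statements merged into one kernel-verified Lean document; each statement's English description precedes it below -/
import Mathlib

section
/- Consider the R-linear maps g : R² → R defined by g(r,s) = V·r + Q·s, and h : R² → R² defined by h(a,b) = (Q·a, V·a + Q²·b). Then ker(g) = range(h). -/
open Polynomial CategoryTheory

noncomputable section

/-- The field `F = ℤ/2ℤ`. -/
abbrev Fld := ZMod 2

/-- The polynomial ring `F[[V]][Q]` (polynomials in `Q` over the power series ring `F[[V]]`). -/
abbrev Rpoly := Polynomial (PowerSeries Fld)

/-- The ring `R = F[[V]][Q]/(Q³)`. -/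
abbrev Rring := Rpoly ⧸ Ideal.span ({(X : Rpoly) ^ 3} : Set Rpoly)

/-- `Q`, the image in `R` of the polynomial variable. -/
def Qe : Rring := Ideal.Quotient.mk (Ideal.span ({(X : Rpoly) ^ 3} : Set Rpoly)) (X : Rpoly)

/-- `V`, the image in `R` of the power series variable. -/
def Ve : Rring := Ideal.Quotient.mk (Ideal.span ({(X : Rpoly) ^ 3} : Set Rpoly)) (C PowerSeries.X)

/-- `g(r,s) = V·r + Q·s`. -/
def gmap : (Rring × Rring) →ₗ[Rring] Rring where
  toFun p := Ve * p.1 + Qe * p.2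
  map_add' p q := by simp; ring
  map_smul' r p := by simp [smul_eq_mul]; ring

/-- `h(a,b) = (Q·a, V·a + Q²·b)`. -/
def hmap : (Rring × Rring) →ₗ[Rring] (Rring × Rring) where
  toFun p := (Qe * p.1, Ve * p.1 + Qe ^ 2 * p.2)
  map_add' p q := by simp [Prod.ext_iff]; constructor <;> ring
  map_smul' r p := by simp [Prod.ext_iff, smul_eq_mul]; constructor <;> ring

local notation "I3" => Ideal.span ({(X : Rpoly) ^ 3} : Set Rpoly)
local notation "π" => Ideal.Quotient.mk I3

lemma aux_two : (1 + 1 : PowerSeries Fld) = 0 := by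
  have : (1 + 1 : Fld) = 0 := by decide
  rw [← map_one (PowerSeries.C : Fld →+* PowerSeries Fld), ← map_add, this, map_zero]

lemma aux_mod (p : Rpoly) : π (p %ₘ (X^3)) = π p := by
  rw [Ideal.Quotient.mk_eq_mk_iff_sub_mem, Ideal.mem_span_singleton]
  have h := modByMonic_add_div p ((X : Rpoly) ^ 3)
  have : p %ₘ X ^ 3 - p = -(X^3 * (p /ₘ X^3)) := by linear_combination h
  rw [this]
  exact (dvd_neg).2 ⟨_, rfl⟩

lemma aux_deg (p : Rpoly) : (p %ₘ (X^3)).degree < 3 := by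
  simpa using degree_modByMonic_lt p (monic_X_pow 3 (R := PowerSeries Fld))

lemma Qe_cube : Qe ^ 3 = 0 := by
  rw [Qe, ← map_pow, Ideal.Quotient.eq_zero_iff_mem]
  exact Ideal.subset_span rfl

/-- `ker g = range h`. -/
theorem stmt3 : LinearMap.ker gmap = LinearMap.range hmap := by
  ext ⟨r, s⟩
  simp only [LinearMap.mem_ker, LinearMap.mem_range, gmap, hmap, LinearMap.coe_mk,
    AddHom.coe_mk, Prod.ext_iff, Prod.exists]
  constructor
  · intro h
    obtain ⟨p₀, hp₀⟩ := Ideal.Quotient.mk_surjective r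
    obtain ⟨q₀, hq₀⟩ := Ideal.Quotient.mk_surjective s
    set p : Rpoly := p₀ %ₘ (X^3) with hpdef
    set q : Rpoly := q₀ %ₘ (X^3) with hqdef
    have hp : π p = r := by rw [hpdef, aux_mod, hp₀]
    have hq : π q = s := by rw [hqdef, aux_mod, hq₀]
    have hpd : p.degree < 3 := aux_deg p₀
    have hqd : q.degree < 3 := aux_deg q₀
    -- the relation in Rpoly
    have hrel : (X:Rpoly)^3 ∣ (C PowerSeries.X * p + X * q) := by
      rw [← Ideal.mem_span_singleton, ← Ideal.Quotient.eq_zero_iff_mem,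
        map_add, map_mul, map_mul, hp, hq]
      exact h
    obtain ⟨d, hd⟩ := hrel
    have hcoeff : ∀ n < 3, (C PowerSeries.X * p + X * q).coeff n = 0 := by
      intro n hn
      rw [hd, coeff_X_pow_mul']
      simp [Nat.not_le_of_lt hn]
    have h0 : PowerSeries.X * p.coeff 0 = 0 := by
      have := hcoeff 0 (by norm_num)
      simpa [coeff_X_mul, coeff_C_mul] using this
    have hp0 : p.coeff 0 = 0 := by
      rcases mul_eq_zero.1 h0 with h | h
      · exact absurd h PowerSeries.X_ne_zero
      · exact h
    have h1 : q.coeff 0 = PowerSeries.X * p.coeff 1 := by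
      have := hcoeff 1 (by norm_num)
      simp only [coeff_add, coeff_C_mul, coeff_X_mul] at this
      have h2 : ∀ x : PowerSeries Fld, -x = x := by
        intro x
        have : (1 + 1 : PowerSeries Fld) * x = 0 := by rw [aux_two, zero_mul]
        linear_combination -this
      linear_combination this + h2 (PowerSeries.X * p.coeff 1)
    have h2' : q.coeff 1 = PowerSeries.X * p.coeff 2 := by
      have := hcoeff 2 (by norm_num)
      simp only [coeff_add, coeff_C_mul, coeff_X_mul] at this
      have h2 : ∀ x : PowerSeries Fld, -x = x := by
        intro x
        have : (1 + 1 : PowerSeries Fld) * x = 0 := by rw [aux_two, zero_mul]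
        linear_combination -this
      linear_combination this + h2 (PowerSeries.X * p.coeff 2)
    -- witnesses
    set a : Rpoly := C (p.coeff 1) + C (p.coeff 2) * X with hadef
    set b : Rpoly := C (q.coeff 2) with hbdef
    refine ⟨π a, π b, ?_, ?_⟩
    · -- Qe * π a = r
      rw [← hp, Qe, ← map_mul]
      congr 1
      ext n
      match n with
      | 0 => simp [hadef, hp0]
      | 1 => simp [hadef, coeff_X_mul]
      | 2 => simp [hadef, coeff_X_mul, coeff_C]
      | (m+3) =>
        rw [coeff_eq_zero_of_degree_lt (lt_of_lt_of_le hpd (by exact_mod_cast Nat.le_add_left 3 m))]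
        simp [hadef, coeff_X_mul, coeff_C]
    · -- Ve * π a + Qe^2 * π b = s
      rw [← hq, Ve, Qe, ← map_mul, ← map_pow, ← map_mul, ← map_add]
      congr 1
      ext n
      match n with
      | 0 => simp [hadef, hbdef, coeff_C, h1]
      | 1 => simp [hadef, hbdef, coeff_C, coeff_C_mul, coeff_X, coeff_X_pow, h2']
      | 2 => simp [hadef, hbdef, coeff_C, coeff_C_mul, coeff_X, coeff_X_pow]
      | (m+3) =>
        rw [coeff_eq_zero_of_degree_lt (lt_of_lt_of_le hqd (by exact_mod_cast Nat.le_add_left 3 m))]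
        simp [hadef, hbdef, coeff_C, coeff_C_mul, coeff_X, coeff_X_pow]
  · rintro ⟨a, b, ha, hb⟩
    rw [← ha, ← hb]
    have h2 : (Ve * Qe) * a + (Ve * Qe) * a = 0 := by
      have e1 : (1 + 1 : Rring) = 0 := by
        have : (1 + 1 : Rpoly) = 0 := by
          rw [← map_one (C : PowerSeries Fld →+* Rpoly), ← map_add, aux_two, map_zero]
        calc (1 + 1 : Rring) = π (1 + 1 : Rpoly) := by rw [map_add, map_one]
        _ = 0 := by rw [this, map_zero]
      calc (Ve * Qe) * a + (Ve * Qe) * a = (1 + 1) * ((Ve * Qe) * a) := by ring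
      _ = 0 := by rw [e1]; exact zero_mul ((Ve * Qe) * a)
    calc Ve * (Qe * a) + Qe * (Ve * a + Qe ^ 2 * b)
        = ((Ve * Qe) * a + (Ve * Qe) * a) + Qe ^ 3 * b := by ring
      _ = 0 := by rw [h2, Qe_cube]; exact (zero_add _).trans (zero_mul b)
end
end

section
/- Fix an integer k ≥ 1 and let M_{2k} denote the R-module (R × R)/⟨(V^k, Q)⟩, the quotient of R² by the cyclic submodule generated by (V^k, Q). Then for every R-module M: (1) Tor_n^R(M, M_{2k}) = 0 for all n ≥ 2; and (2) Tor_1^R(M, M_{2k}) is isomorphic, as an F-vector space, to the submodule {x ∈ M : V^k·x = 0 and Q·x = 0} of M. -/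
open Polynomial CategoryTheory

noncomputable section

/-- Scalars commute with themselves: needed to form `R`-scalar multiples of linear maps. -/
instance (M : Type) [AddCommGroup M] [Module Rring M] : SMulCommClass Rring Rring M :=
  smulCommClass_self Rring M

/-- The `R`-module `M_{2k} = (R × R)/⟨(V^k, Q)⟩`. -/
abbrev M2k (k : ℕ) :=
  (Rring × Rring) ⧸ Submodule.span Rring ({(Ve ^ k, Qe)} : Set (Rring × Rring))

/-- The ring structure on `R` coming from its commutative ring structure (needed so that the
monoidal structure on `ModuleCat R` is found). -/
instance Rring.instRingOfCommRing : Ring Rring := CommRing.toRing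

set_option maxHeartbeats 1000000
set_option synthInstance.maxHeartbeats 400000

namespace Stmt15Aux

open CategoryTheory.Limits

/-- The generator `(V^k, Q)`. -/
abbrev vel (k : ℕ) : Rring × Rring := (Ve ^ k, Qe)

/-- The map `R → R²`, `a ↦ a • (V^k, Q)`. -/
def fmap (k : ℕ) : Rring →ₗ[Rring] Rring × Rring :=
  LinearMap.toSpanSingleton Rring _ (vel k)

lemma X_not_dvd_C (c : PowerSeries Fld) (hc : c ≠ 0) : ¬ (X : Rpoly) ∣ C c := by
  rintro ⟨u, hu⟩
  have h0 := congrArg (fun p : Rpoly => p.coeff 0) hu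
  simp only [coeff_C, if_pos rfl, mul_coeff_zero, coeff_X_zero, zero_mul] at h0
  exact hc h0

lemma key (k : ℕ) (a : Rring) (h1 : a * Qe = 0) (h2 : a * Ve ^ k = 0) : a = 0 := by
  obtain ⟨p, rfl⟩ := Ideal.Quotient.mk_surjective a
  have h1' : (X : Rpoly) ^ 3 ∣ p * X := by
    rw [show Qe = Ideal.Quotient.mk _ (X : Rpoly) from rfl, ← map_mul,
      Ideal.Quotient.eq_zero_iff_mem, Ideal.mem_span_singleton] at h1
    exact h1
  have h2' : (X : Rpoly) ^ 3 ∣ p * (C PowerSeries.X) ^ k := by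
    rw [show Ve = Ideal.Quotient.mk _ (C PowerSeries.X : Rpoly) from rfl, ← map_pow, ← map_mul,
      Ideal.Quotient.eq_zero_iff_mem, Ideal.mem_span_singleton] at h2
    exact h2
  obtain ⟨t, ht⟩ := h1'
  have hp : p = X ^ 2 * t := by
    apply mul_left_cancel₀ (Polynomial.X_ne_zero (R := PowerSeries Fld))
    linear_combination ht
  obtain ⟨s, hs⟩ := h2'
  have h3 : t * (C PowerSeries.X) ^ k = X * s := by
    apply mul_left_cancel₀ (pow_ne_zero 2 (Polynomial.X_ne_zero (R := PowerSeries Fld)))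
    rw [hp] at hs
    linear_combination hs
  rcases (Polynomial.prime_X (R := PowerSeries Fld)).2.2 t ((C PowerSeries.X) ^ k)
      ⟨s, h3⟩ with h4 | h4
  · obtain ⟨r, hr⟩ := h4
    rw [Ideal.Quotient.eq_zero_iff_mem, Ideal.mem_span_singleton]
    exact ⟨r, by rw [hp, hr]; ring⟩
  · rw [← map_pow] at h4
    exact absurd h4 (X_not_dvd_C _ (pow_ne_zero k PowerSeries.X_ne_zero))

lemma fmap_apply (k : ℕ) (a : Rring) : fmap k a = (a * Ve ^ k, a * Qe) := by
  have h0 : fmap k a = a • vel k := LinearMap.toSpanSingleton_apply Rring _ _ a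
  rw [h0, Prod.smul_mk, smul_eq_mul, smul_eq_mul]

lemma fmap_inj (k : ℕ) : Function.Injective (fmap k) := by
  rw [injective_iff_map_eq_zero]
  intro a ha
  rw [fmap_apply, Prod.ext_iff] at ha
  exact key k a ha.2 ha.1

/-- The modules in the resolution. -/
def cX : ℕ → ModuleCat Rring
  | 0 => ModuleCat.of Rring (Rring × Rring)
  | 1 => ModuleCat.of Rring Rring
  | _ + 2 => ModuleCat.of Rring PUnit

/-- The differentials in the resolution. -/
def cd (k : ℕ) : ∀ i j : ℕ, cX i ⟶ cX j
  | 1, 0 => ModuleCat.ofHom (fmap k)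
  | 0, _ => 0
  | 1, _ + 1 => 0
  | _ + 2, _ => 0

/-- The resolution complex `0 → R → R² → 0`. -/
def cplx (k : ℕ) : ChainComplex (ModuleCat Rring) ℕ where
  X := cX
  d := cd k
  shape i j h := by
    match i, j with
    | 1, 0 => exact absurd rfl h
    | 0, _ => rfl
    | 1, _ + 1 => rfl
    | _ + 2, _ => rfl
  d_comp_d' i j l hij hjl := by
    simp only [ComplexShape.down_Rel] at hij hjl
    subst hjl
    subst hij
    show cd k (l + 1 + 1) (l + 1) ≫ cd k (l + 1) l = 0
    rw [show cd k (l + 1 + 1) (l + 1) = 0 from rfl, Limits.zero_comp]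

/-- The short complex `R → R² → M_{2k}`. -/
def S0 (k : ℕ) : ShortComplex (ModuleCat Rring) :=
  ShortComplex.mk (ModuleCat.ofHom (fmap k))
    (ModuleCat.ofHom (Submodule.span Rring ({vel k} : Set (Rring × Rring))).mkQ)
    (by
      apply ModuleCat.hom_ext
      show (Submodule.span Rring ({vel k} : Set (Rring × Rring))).mkQ.comp (fmap k) = 0
      apply LinearMap.ext
      intro a
      show Submodule.mkQ _ (fmap k a) = 0
      rw [fmap_apply, Submodule.mkQ_apply, Submodule.Quotient.mk_eq_zero]
      have : (a * Ve ^ k, a * Qe) = a • vel k := by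
        rw [Prod.smul_mk, smul_eq_mul, smul_eq_mul]
      rw [this]
      exact Submodule.smul_mem _ a (Submodule.mem_span_singleton_self _))

lemma S0_exact (k : ℕ) : (S0 k).Exact := by
  rw [ShortComplex.moduleCat_exact_iff]
  intro (x : Rring × Rring) hx
  have hx' : x ∈ Submodule.span Rring ({vel k} : Set (Rring × Rring)) := by
    rw [← Submodule.Quotient.mk_eq_zero]
    exact hx
  obtain ⟨a, ha⟩ := Submodule.mem_span_singleton.mp hx'
  refine ⟨a, ?_⟩
  show fmap k a = x
  rw [fmap_apply]
  rw [show (a * Ve ^ k, a * Qe) = a • vel k by rw [Prod.smul_mk, smul_eq_mul, smul_eq_mul]]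
  exact ha

instance (k : ℕ) : Epi (S0 k).g :=
  (ModuleCat.epi_iff_surjective _).mpr
    (by exact Submodule.mkQ_surjective (Submodule.span Rring ({vel k} : Set (Rring × Rring))))

/-- `M_{2k}` is the cokernel of `fmap k`. -/
def cokIsColimit (k : ℕ) : IsColimit (CokernelCofork.ofπ (S0 k).g (S0 k).zero) :=
  (S0_exact k).gIsCokernel

instance : Projective (ModuleCat.of Rring PUnit) where
  factors f e _ := ⟨0, by
    apply ModuleCat.hom_ext
    apply LinearMap.ext
    intro x
    have hx : x = 0 := Subsingleton.elim _ _
    show e.hom 0 = f.hom x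
    rw [hx, map_zero, map_zero]⟩

instance : Projective (ModuleCat.of Rring Rring) :=
  (IsProjective.iff_projective _).mp inferInstance

instance : Projective (ModuleCat.of Rring (Rring × Rring)) :=
  (IsProjective.iff_projective _).mp inferInstance

/-- The augmentation map. -/
def pi0 (k : ℕ) : cplx k ⟶ (ChainComplex.single₀ (ModuleCat Rring)).obj
    (ModuleCat.of Rring (M2k k)) :=
  (ChainComplex.toSingle₀Equiv (cplx k) _).symm ⟨(S0 k).g, (S0 k).zero⟩

lemma pi0_f_zero (k : ℕ) : (pi0 k).f 0 = (S0 k).g :=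
  ChainComplex.toSingle₀Equiv_symm_apply_f_zero _ _

instance pi0_qis (k : ℕ) : QuasiIso (pi0 k) where
  quasiIsoAt n := by
    match n with
    | 0 =>
      rw [ChainComplex.quasiIsoAt₀_iff]
      have hg₁ : ((cplx k).sc' 1 0 0).g = 0 := rfl
      have hg₂ : ((((ChainComplex.single₀ (ModuleCat Rring)).obj
          (ModuleCat.of Rring (M2k k)))).sc' 1 0 0).g = 0 := rfl
      have hf₂ : ((((ChainComplex.single₀ (ModuleCat Rring)).obj
          (ModuleCat.of Rring (M2k k)))).sc' 1 0 0).f = 0 := rfl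
      have comm : ((HomologicalComplex.shortComplexFunctor' (ModuleCat Rring)
            (ComplexShape.down ℕ) 1 0 0).map (pi0 k)).τ₂ ≫
            𝟙 (ModuleCat.of Rring (M2k k)) =
          (S0 k).g ≫ 𝟙 (ModuleCat.of Rring (M2k k)) := by
        show (pi0 k).f 0 ≫ 𝟙 _ = (S0 k).g ≫ 𝟙 _
        rw [pi0_f_zero]
        rfl
      exact (ShortComplex.LeftHomologyMapData.ofIsColimitCokernelCofork
        ((HomologicalComplex.shortComplexFunctor' (ModuleCat Rring)
          (ComplexShape.down ℕ) 1 0 0).map (pi0 k))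
        hg₁ (CokernelCofork.ofπ (S0 k).g (S0 k).zero) (cokIsColimit k)
        hg₂ _ (CokernelCofork.IsColimit.ofId _ hf₂)
        (𝟙 (ModuleCat.of Rring (M2k k))) comm).quasiIso_iff.mpr (by
          show IsIso (𝟙 (ModuleCat.of Rring (M2k k)))
          infer_instance)
    | 1 =>
      rw [quasiIsoAt_iff_exactAt' (pi0 k) 1 (ChainComplex.exactAt_succ_single_obj _ 0)]
      rw [HomologicalComplex.exactAt_iff' (K := cplx k) (i := 2) (j := 1) (k := 0)
        (by simp) (by simp)]
      rw [ShortComplex.moduleCat_exact_iff]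
      intro x hx
      have hx0 : x = 0 := by
        apply (injective_iff_map_eq_zero _).mp (fmap_inj k)
        exact hx
      exact ⟨0, by rw [map_zero, hx0]⟩
    | (n + 2) =>
      rw [quasiIsoAt_iff_exactAt' (pi0 k) (n + 2)
        (ChainComplex.exactAt_succ_single_obj _ (n + 1))]
      rw [HomologicalComplex.exactAt_iff]
      exact ShortComplex.exact_of_isZero_X₂ _
        (ModuleCat.isZero_of_subsingleton (ModuleCat.of Rring PUnit))

/-- The projective resolution of `M_{2k}`. -/
def resolution (k : ℕ) : ProjectiveResolution (ModuleCat.of Rring (M2k k)) where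
  complex := cplx k
  projective n := by
    match n with
    | 0 => exact (inferInstance : Projective (ModuleCat.of Rring (Rring × Rring)))
    | 1 => exact (inferInstance : Projective (ModuleCat.of Rring Rring))
    | n + 2 => exact (inferInstance : Projective (ModuleCat.of Rring PUnit))
  π := pi0 k
  quasiIso := pi0_qis k

section Tensor

open MonoidalCategory

variable (k : ℕ) (M : Type) [AddCommGroup M] [Module Rring M]

/-- The functor `M ⊗ -`. -/
abbrev Fn : ModuleCat Rring ⥤ ModuleCat Rring :=
  (tensoringLeft (ModuleCat Rring)).obj (ModuleCat.of Rring M)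

/-- The tensored complex. -/
abbrev T : ChainComplex (ModuleCat Rring) ℕ :=
  ((Fn M).mapHomologicalComplex (ComplexShape.down ℕ)).obj (cplx k)

/-- The short complex computing `H₁` of the tensored complex. -/
abbrev S : ShortComplex (ModuleCat Rring) := (T k M).sc' 2 1 0

lemma hSf : (S k M).f = 0 := by
  show (Fn M).map ((cplx k).d 2 1) = 0
  rw [show (cplx k).d 2 1 = 0 from rfl]
  exact (Fn M).map_zero _ _

/-- A general kernel-comparison `AddEquiv`. -/
def kerAddEquiv {A B A' B' : Type} [AddCommGroup A] [Module Rring A]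
    [AddCommGroup B] [Module Rring B] [AddCommGroup A'] [Module Rring A']
    [AddCommGroup B'] [Module Rring B']
    (g₁ : A →ₗ[Rring] B) (g₂ : A' →ₗ[Rring] B') (eA : A ≃ₗ[Rring] A') (eB : B ≃ₗ[Rring] B')
    (h : ∀ a, eB (g₁ a) = g₂ (eA a)) : LinearMap.ker g₁ ≃+ LinearMap.ker g₂ where
  toFun x := ⟨eA x, by
    have hx : g₁ x = 0 := x.2
    rw [LinearMap.mem_ker, ← h, hx, map_zero]⟩
  invFun y := ⟨eA.symm y, by
    have hy : g₂ (y : A') = 0 := y.2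
    have h2 : eB (g₁ (eA.symm y)) = 0 := by rw [h, eA.apply_symm_apply, hy]
    rw [LinearMap.mem_ker]
    exact (LinearEquiv.map_eq_zero_iff eB).mp h2⟩
  left_inv x := by
    apply Subtype.ext
    exact eA.symm_apply_apply _
  right_inv y := by
    apply Subtype.ext
    exact eA.apply_symm_apply _
  map_add' x y := by
    apply Subtype.ext
    exact map_add eA _ _

/-- The equivalence `M ⊗ R ≃ M`. -/
def eA : (TensorProduct Rring M Rring) ≃ₗ[Rring] M := TensorProduct.rid Rring M

/-- The equivalence `M ⊗ (R × R) ≃ M × M`. -/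
def eB : (TensorProduct Rring M (Rring × Rring)) ≃ₗ[Rring] M × M :=
  (TensorProduct.prodRight Rring Rring M Rring Rring).trans
    ((TensorProduct.rid Rring M).prodCongr (TensorProduct.rid Rring M))

lemma hcomm : ∀ a : TensorProduct Rring M Rring,
    eB M ((S k M).g a) =
      (LinearMap.prod ((Ve ^ k) • (LinearMap.id : M →ₗ[Rring] M))
        (Qe • (LinearMap.id : M →ₗ[Rring] M))) (eA M a) := by
  intro a
  show eB M (LinearMap.lTensor M (fmap k) a) = _
  induction a using TensorProduct.induction_on with
  | zero => simp only [map_zero]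
  | tmul m r =>
    show eB M (m ⊗ₜ[Rring] (fmap k r)) = _
    rw [fmap_apply]
    rw [show eB M (m ⊗ₜ[Rring] (r * Ve ^ k, r * Qe)) = ((r * Ve ^ k) • m, (r * Qe) • m) by
      simp [eB, TensorProduct.prodRight_tmul, TensorProduct.rid_tmul]]
    show _ = (Ve ^ k • r • m, Qe • r • m)
    rw [smul_smul, smul_smul, mul_comm r (Ve ^ k), mul_comm r Qe]
  | add x y hx hy =>
    simp only [map_add, hx, hy]

/-- The kernel of `S.g` is the desired kernel. -/
def finalKerEquiv : LinearMap.ker (S k M).g.hom ≃+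
    LinearMap.ker (LinearMap.prod
      ((Ve ^ k) • (LinearMap.id : M →ₗ[Rring] M))
      (Qe • (LinearMap.id : M →ₗ[Rring] M))) :=
  kerAddEquiv ((S k M).g.hom :
      TensorProduct Rring M Rring →ₗ[Rring] TensorProduct Rring M (Rring × Rring))
    _ (eA M) (eB M) (hcomm k M)

end Tensor

end Stmt15Aux

open Stmt15Aux CategoryTheory.Limits

/-- For `k ≥ 1` and any `R`-module `M`: `Torₙ^R(M, M_{2k}) = 0` for all `n ≥ 2`,
and `Tor₁^R(M, M_{2k})` is isomorphic, as an `F`-vector space, to the submodule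
`{x ∈ M : V^k·x = 0 and Q·x = 0}` of `M`. -/
theorem stmt15 (k : ℕ) (hk : 1 ≤ k) (M : Type) [AddCommGroup M] [Module Rring M] :
    (∀ n : ℕ, 2 ≤ n →
      Subsingleton
        (((Tor (ModuleCat Rring) n).obj (ModuleCat.of Rring M)).obj
          (ModuleCat.of Rring (M2k k)))) ∧
    Nonempty
      ((((Tor (ModuleCat Rring) 1).obj (ModuleCat.of Rring M)).obj
          (ModuleCat.of Rring (M2k k))) ≃+
        LinearMap.ker (LinearMap.prod
          ((Ve ^ k) • (LinearMap.id : M →ₗ[Rring] M))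
          (Qe • (LinearMap.id : M →ₗ[Rring] M)))) := by
  constructor
  · intro n hn
    obtain ⟨m, rfl⟩ : ∃ m, n = m + 2 := ⟨n - 2, by omega⟩
    have e : ((Tor (ModuleCat Rring) (m + 2)).obj (ModuleCat.of Rring M)).obj
        (ModuleCat.of Rring (M2k k)) ≅ (T k M).homology (m + 2) :=
      (resolution k).isoLeftDerivedObj (Fn M) (m + 2)
    haveI : Subsingleton (↑((T k M).X (m + 2))) :=
      (inferInstance : Subsingleton (TensorProduct Rring M PUnit))
    have h0 : IsZero ((T k M).homology (m + 2)) :=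
      ShortComplex.isZero_homology_of_isZero_X₂ _
        (ModuleCat.isZero_of_subsingleton ((T k M).X (m + 2)))
    have hz : IsZero (((Tor (ModuleCat Rring) (m + 2)).obj (ModuleCat.of Rring M)).obj
        (ModuleCat.of Rring (M2k k))) := IsZero.of_iso h0 e
    have e2 := hz.iso (ModuleCat.isZero_of_subsingleton (ModuleCat.of Rring PUnit))
    exact Equiv.subsingleton e2.toLinearEquiv.toEquiv
  · have e1 : ((Tor (ModuleCat Rring) 1).obj (ModuleCat.of Rring M)).obj
        (ModuleCat.of Rring (M2k k)) ≅ (T k M).homology 1 :=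
      (resolution k).isoLeftDerivedObj (Fn M) 1
    have e2 : (T k M).homology 1 ≅ (S k M).homology :=
      ShortComplex.homologyMapIso
        ((HomologicalComplex.natIsoSc' (ModuleCat Rring) (ComplexShape.down ℕ) 2 1 0
          (by simp) (by simp)).app (T k M))
    have e3 : (S k M).homology ≅ ModuleCat.of Rring (LinearMap.ker (S k M).g.hom) :=
      ((S k M).asIsoHomologyπ (hSf k M)).symm ≪≫ (S k M).moduleCatCyclesIso
    exact ⟨((e1 ≪≫ e2 ≪≫ e3).toLinearEquiv.toAddEquiv).trans (finalKerEquiv k M)⟩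
end
end
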